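/- Standard factorization produces Lyndon words: if u is a Lyndon word of length ≥ 2 and u = vw where w is the longest proper Lyndon suffix of u (equivalently, the lexicographically smallest proper nonempty suffix), then v is also a Lyndon word and v < w lexicographically. -/

import Mathlib

/-- A Lyndon word in the standard convention: a nonempty word strictly
smaller than all of its proper nonempty suffixes. -/
def IsLyndon {X : Type*} [LinearOrder X] (u : List X) : Prop :=
  u ≠ [] ∧ ∀ v w : List X, v ≠ [] → w ≠ [] → u = v ++ w →
    List.Lex (· < ·) u w

section aux
variable {X : Type*} [LinearOrder X]

lemma lex_append_self (v : List X) {w : List X} (hw : w ≠ []) :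
    List.Lex (· < ·) v (v ++ w) := by
  induction v with
  | nil => cases w with
    | nil => exact absurd rfl hw
    | cons a l => exact List.Lex.nil
  | cons a l ih => exact List.Lex.cons ih

lemma lex_of_lex_append {p x y : List X} (h : List.Lex (· < ·) (p ++ x) (p ++ y)) :
    List.Lex (· < ·) x y := by
  induction p with
  | nil => exact h
  | cons a l ih => exact ih ((List.lex_cons_iff).1 h)

lemma lex_prefix_or {s t : List X} (h : List.Lex (· < ·) s t) (x y : List X) :
    s <+: t ∨ List.Lex (· < ·) (s ++ x) (t ++ y) := by
  induction h with
  | nil => exact Or.inl (List.nil_prefix)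
  | @cons a l1 l2 h ih =>
      rcases ih with h' | h'
      · exact Or.inl (List.cons_prefix_cons.2 ⟨rfl, h'⟩)
      · exact Or.inr (List.Lex.cons h')
  | rel hab => exact Or.inr (List.Lex.rel hab)

lemma suffix_of_suffix_of_le {t w u : List X} (ht : t <:+ u) (hw : w <:+ u)
    (h : t.length ≤ w.length) : t <:+ w := by
  rw [← List.reverse_prefix] at ht hw ⊢
  obtain ⟨s, hs⟩ := hw
  rw [← hs] at ht
  rw [List.isPrefix_append_of_length (by simpa using h)] at ht
  exact ht
end aux

/-- Standard factorization: if `u` is a Lyndon word of length ≥ 2 and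
`u = vw` where `w` is the longest proper Lyndon suffix of `u`, then `v` is
a Lyndon word and `v < w`. -/
theorem lyndon_standard_factorization {X : Type*} [LinearOrder X]
    (u v w : List X) (hu : IsLyndon u) (hlen : 2 ≤ u.length)
    (hsplit : u = v ++ w) (hv : v ≠ []) (hw : w ≠ []) (hwl : IsLyndon w)
    (hmax : ∀ v' w' : List X, v' ≠ [] → w' ≠ [] → u = v' ++ w' →
      IsLyndon w' → w'.length ≤ w.length) :
    IsLyndon v ∧ List.Lex (· < ·) v w := by
  haveI : IsStrictTotalOrder (List X) (List.Lex (· < ·)) := { isStrictWeakOrder_of_isOrderConnected with }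
  -- w is minimal among proper nonempty suffixes
  have hmin : ∀ n (t v' : List X), t.length ≤ n → v' ≠ [] → t ≠ [] → u = v' ++ t →
      ¬ List.Lex (· < ·) t w := by
    intro n
    induction n with
    | zero => intro t v' hn _ ht _; cases t; exact absurd rfl ht; simp at hn
    | succ n ih =>
      intro t v' hn hv' ht hsplit' hlex
      by_cases hL : IsLyndon t
      · -- t is Lyndon, so |t| ≤ |w|, so t suffix of w, t ≠ w, so Lex w t : contra
        have hle : t.length ≤ w.length := hmax v' t hv' ht hsplit' hL
        have hts : t <:+ w := suffix_of_suffix_of_le ⟨v', hsplit'.symm⟩ ⟨v, hsplit.symm⟩ hle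
        obtain ⟨p, hp⟩ := hts
        have hpne : p ≠ [] := by
          rintro rfl
          simp at hp
          subst hp
          exact (irrefl_of (List.Lex (· < ·)) t) hlex
        have : List.Lex (· < ·) w t := hwl.2 p t hpne ht hp.symm
        exact asymm_of (List.Lex (· < ·)) hlex this
      · -- t not Lyndon: some suffix q of t with ¬ t < q, then q < w, shorter
        rw [IsLyndon, not_and] at hL
        push_neg at hL
        obtain ⟨p, q, hp, hq, hpq, hnl⟩ := hL ht
        have hqt : List.Lex (· < ·) q t := by
          rcases trichotomous_of (List.Lex (· < ·)) q t with h | h | h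
          · exact h
          · subst h
            have := congrArg List.length hpq
            simp at this
            exact (hp this).elim
          · exact absurd h hnl
        have hqw : List.Lex (· < ·) q w := _root_.trans_of (List.Lex (· < ·)) hqt hlex
        have hql : q.length ≤ n := by
          have := congrArg List.length hpq
          simp at this
          have hpl : 1 ≤ p.length := List.length_pos_iff.2 hp
          omega
        exact ih q (v' ++ p) hql (by simp [hv']) hq (by rw [hsplit', hpq, List.append_assoc]) hqw
  constructor
  · refine ⟨hv, ?_⟩
    intro a b ha hb hab
    have hub : List.Lex (· < ·) u (b ++ w) :=
      hu.2 a (b ++ w) ha (by simp [hb]) (by rw [hsplit, hab, List.append_assoc])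
    rcases trichotomous_of (List.Lex (· < ·)) v b with h | h | h
    · exact h
    · exfalso
      have := congrArg List.length hab
      rw [h] at this
      simp at this
      exact ha this
    · exfalso
      rcases lex_prefix_or h w w with hpre | hlex
      · obtain ⟨c, hc⟩ := hpre
        have hcne : c ≠ [] := by
          rintro rfl
          simp at hc
          have := congrArg List.length hab
          rw [← hc] at this
          simp at this
          exact ha this
        have : List.Lex (· < ·) (c ++ w) w := by
          apply lex_of_lex_append (p := b)
          rw [← List.append_assoc, hc, ← hsplit]
          exact hub
        exact hmin (c ++ w).length (c ++ w) b le_rfl hb (by simp [hcne])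
          (by rw [hsplit, ← hc, List.append_assoc]) this
      · exact asymm_of (List.Lex (· < ·)) hub (by rwa [← hsplit] at hlex)
  · have h1 : List.Lex (· < ·) v u := hsplit ▸ lex_append_self v hw
    have h2 : List.Lex (· < ·) u w := hu.2 v w hv hw hsplit
    exact _root_.trans_of (List.Lex (· < ·)) h1 h2
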